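/- arXiv:math/0207191 — 2 statements merged into one kernel-verified Lean document; each statement's English description precedes it below -/
import Mathlib

section
/- Let k ≥ 2. If C is a bilinear Hochschild 2-cocycle on S(g) (i.e. δC = 0) which is skew-symmetric in its two arguments, tangential, homogeneous of degree -(2k-1) and correct of degree -(2k-1), then C is identically zero. -/
open MvPolynomial

noncomputable section

namespace TangentialStar

/-- The symmetric algebra `S(g)` of an `m`-dimensional Lie algebra `g`, identified with the
algebra of real polynomial functions on the dual `g*` in the dual coordinates `(x_i)` of a
fixed (Jordan–Hölder) basis `(X_i)`. -/
abbrev P (m : ℕ) := MvPolynomial (Fin m) ℝ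

/-- The linear Poisson bracket on `S(g)` associated to the structure constants `c`
(`[X_i, X_j] = ∑ k, c i j k • X_k`). -/
def pb {m : ℕ} (c : Fin m → Fin m → Fin m → ℝ) (f g : P m) : P m :=
  ∑ i : Fin m, ∑ j : Fin m,
    (∑ k : Fin m, MvPolynomial.C (c i j k) * MvPolynomial.X k) * pderiv i f * pderiv j g

/-- `c` is the family of structure constants of a Lie algebra (skew-symmetry and Jacobi). -/
def IsLieStructure {m : ℕ} (c : Fin m → Fin m → Fin m → ℝ) : Prop :=
  (∀ i j k, c i j k = - c j i k) ∧
  (∀ i j l r, (∑ k : Fin m, (c i j k * c k l r + c j l k * c k i r + c l i k * c k j r)) = 0)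

/-- `c` is the family of structure constants of a nilpotent Lie algebra expressed in a
Jordan–Hölder basis, i.e. `[X_i, X_j] ≡ 0 mod (X_1, …, X_{j-1})` whenever `i ≥ j`. -/
def IsJordanHolderLie {m : ℕ} (c : Fin m → Fin m → Fin m → ℝ) : Prop :=
  IsLieStructure c ∧ (∀ i j k : Fin m, j ≤ i → j ≤ k → c i j k = 0)

/-- A polynomial on `g*` is invariant iff it Poisson-commutes with all linear functions
(for a nilpotent Lie algebra this is invariance under the coadjoint action). -/
def IsInvariant {m : ℕ} (c : Fin m → Fin m → Fin m → ℝ) (Δ : P m) : Prop :=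
  ∀ i : Fin m, pb c (MvPolynomial.X i) Δ = 0

/-- `ℝ`-linearity of a plain map. -/
def IsLin {M : Type*} [AddCommMonoid M] [Module ℝ M] (T : M → M) : Prop :=
  (∀ u v, T (u + v) = T u + T v) ∧ ∀ (r : ℝ) (u), T (r • u) = r • T u

def IsBilin {M : Type*} [AddCommMonoid M] [Module ℝ M] (Cc : M → M → M) : Prop :=
  (∀ v, IsLin fun u => Cc u v) ∧ ∀ u, IsLin (Cc u)

def IsTrilin {M : Type*} [AddCommMonoid M] [Module ℝ M] (E : M → M → M → M) : Prop :=
  (∀ v w, IsLin fun u => E u v w) ∧ (∀ u w, IsLin fun v => E u v w) ∧ ∀ u v, IsLin (E u v)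

/-- Hochschild coboundary of a `1`-cochain. -/
def hoch1 {m : ℕ} (T : P m → P m) : P m → P m → P m :=
  fun u v => u * T v - T (u * v) + T u * v

/-- Hochschild coboundary of a `2`-cochain. -/
def hoch2 {m : ℕ} (Cc : P m → P m → P m) : P m → P m → P m → P m :=
  fun u v w => u * Cc v w - Cc (u * v) w + Cc u (v * w) - Cc u v * w

/-- Hochschild coboundary of a `3`-cochain. -/
def hoch3 {m : ℕ} (E : P m → P m → P m → P m) : P m → P m → P m → P m → P m :=
  fun u v w t => u * E v w t - E (u * v) w t + E u (v * w) t - E u v (w * t) + E u v w * t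

/-- A linear map is homogeneous of degree `-n` : it sends `S^a(g)` into `S^{a-n}(g)`. -/
def Homog1 {m : ℕ} (n : ℕ) (T : P m → P m) : Prop :=
  ∀ (a : ℕ) (u : P m), u.IsHomogeneous a →
    (T u).IsHomogeneous (a - n) ∧ (a < n → T u = 0)

/-- A bilinear map is homogeneous of degree `-n` :
it sends `S^a(g) × S^b(g)` into `S^{a+b-n}(g)`. -/
def HomogBi {m : ℕ} (n : ℕ) (Cc : P m → P m → P m) : Prop :=
  ∀ (a b : ℕ) (u v : P m), u.IsHomogeneous a → v.IsHomogeneous b →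
    (Cc u v).IsHomogeneous (a + b - n) ∧ (a + b < n → Cc u v = 0)

/-- A trilinear map is homogeneous of degree `-n`. -/
def HomogTri {m : ℕ} (n : ℕ) (E : P m → P m → P m → P m) : Prop :=
  ∀ (a b cd : ℕ) (u v w : P m), u.IsHomogeneous a → v.IsHomogeneous b → w.IsHomogeneous cd →
    (E u v w).IsHomogeneous (a + b + cd - n) ∧ (a + b + cd < n → E u v w = 0)

/-- A linear map vanishes on constants. -/
def VC1 {m : ℕ} (T : P m → P m) : Prop := ∀ r : ℝ, T (MvPolynomial.C r) = 0

/-- A bilinear map vanishes on constants. -/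
def VCBi {m : ℕ} (Cc : P m → P m → P m) : Prop :=
  ∀ (r : ℝ) (v : P m), Cc (MvPolynomial.C r) v = 0 ∧ Cc v (MvPolynomial.C r) = 0

/-- A trilinear map vanishes on constants. -/
def VCTri {m : ℕ} (E : P m → P m → P m → P m) : Prop :=
  ∀ (r : ℝ) (v w : P m),
    E (MvPolynomial.C r) v w = 0 ∧ E v (MvPolynomial.C r) w = 0 ∧ E v w (MvPolynomial.C r) = 0

/-- Tangential linear operator (Definition 2): vanishes on constants and commutes with
multiplication by invariant polynomials. -/
def Tang1 {m : ℕ} (c : Fin m → Fin m → Fin m → ℝ) (T : P m → P m) : Prop :=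
  VC1 T ∧ ∀ Δ : P m, IsInvariant c Δ → ∀ u, Δ * T u = T (Δ * u)

/-- Tangential bilinear operator (Definition 2). -/
def TangBi {m : ℕ} (c : Fin m → Fin m → Fin m → ℝ) (Cc : P m → P m → P m) : Prop :=
  VCBi Cc ∧ ∀ Δ : P m, IsInvariant c Δ → ∀ u v,
    Δ * Cc u v = Cc (Δ * u) v ∧ Δ * Cc u v = Cc u (Δ * v)

/-! ### Differential operators and decompositions into differential parts -/

/-- Multi-indexes relative to the `m` variables `(x_i)`. -/
abbrev MIdx (m : ℕ) := Fin m →₀ ℕ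

/-- Length `|α|` of a multi-index. -/
def mdeg {σ : Type*} (α : σ →₀ ℕ) : ℕ := α.sum fun _ k => k

/-- The operator `∂^α` on polynomials. -/
def pdM {R : Type*} [CommSemiring R] {σ : Type*} (α : σ →₀ ℕ) :
    Module.End R (MvPolynomial σ R) :=
  (α.support.toList.map fun i =>
    ((pderiv i).toLinearMap ^ (α i) : Module.End R (MvPolynomial σ R))).prod

/-- The (possibly infinite-order, i.e. algebraic) linear operator with coefficient family
`co` : `u ↦ ∑_α co α ∂^α u` (the sum is finite on each polynomial). -/
def applyCo1 {m : ℕ} (co : MIdx m → P m) (u : P m) : P m :=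
  ∑ᶠ α : MIdx m, co α * pdM α u

/-- The differential part of total derivation order `N` of the linear operator with
coefficients `co`. -/
def applyCo1N {m : ℕ} (co : MIdx m → P m) (N : ℕ) (u : P m) : P m :=
  ∑ᶠ α : MIdx m, if mdeg α = N then co α * pdM α u else 0

def applyCoBi {m : ℕ} (co : MIdx m → MIdx m → P m) (u v : P m) : P m :=
  ∑ᶠ (α : MIdx m) (β : MIdx m), co α β * pdM α u * pdM β v

def applyCoBiN {m : ℕ} (co : MIdx m → MIdx m → P m) (N : ℕ) (u v : P m) : P m :=
  ∑ᶠ (α : MIdx m) (β : MIdx m),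
    if mdeg α + mdeg β = N then co α β * pdM α u * pdM β v else 0

def applyCoTri {m : ℕ} (co : MIdx m → MIdx m → MIdx m → P m) (u v w : P m) : P m :=
  ∑ᶠ (α : MIdx m) (β : MIdx m) (γ : MIdx m), co α β γ * pdM α u * pdM β v * pdM γ w

def applyCoTriN {m : ℕ} (co : MIdx m → MIdx m → MIdx m → P m) (N : ℕ) (u v w : P m) : P m :=
  ∑ᶠ (α : MIdx m) (β : MIdx m) (γ : MIdx m),
    if mdeg α + mdeg β + mdeg γ = N then co α β γ * pdM α u * pdM β v * pdM γ w else 0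

/-- A linear operator is differential (of finite order) iff it is a finite sum `∑ a_α ∂^α`. -/
def IsDifferential1 {m : ℕ} (T : P m → P m) : Prop :=
  ∃ (s : Finset (MIdx m)) (co : MIdx m → P m), ∀ u, T u = ∑ α ∈ s, co α * pdM α u

/-- A bilinear operator is differential iff it is a finite sum `∑ a_{αβ} ∂^α ⊗ ∂^β`. -/
def IsDifferentialBi {m : ℕ} (Cc : P m → P m → P m) : Prop :=
  ∃ (s : Finset (MIdx m × MIdx m)) (co : MIdx m × MIdx m → P m),
    ∀ u v, Cc u v = ∑ p ∈ s, co p * pdM p.1 u * pdM p.2 v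

/-- A trilinear operator is differential. -/
def IsDifferentialTri {m : ℕ} (E : P m → P m → P m → P m) : Prop :=
  ∃ (s : Finset (MIdx m × MIdx m × MIdx m)) (co : MIdx m × MIdx m × MIdx m → P m),
    ∀ u v w, E u v w = ∑ p ∈ s, co p * pdM p.1 u * pdM p.2.1 v * pdM p.2.2 w

/-! ### The algebra `ℝ(λ)[p,q]` and correctness (Definition 5) -/

/-- The field `ℝ(λ₁,…,λ_e)` of rational functions in the generic invariants. -/
abbrev KK (e : ℕ) := FractionRing (MvPolynomial (Fin e) ℝ)

/-- The algebra `ℝ(λ)[p,q]` of polynomials in `p₁,…,p_d,q₁,…,q_d` with coefficients rational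
in the `λ_k`; `Sum.inl` indexes the `p`-variables and `Sum.inr` the `q`-variables. -/
abbrev PQ (d e : ℕ) := MvPolynomial (Fin d ⊕ Fin d) (KK e)

/-- `‖u‖`, the degree of `u ∈ ℝ(λ)[p,q]` as a polynomial in the variables `p`
(`⊥` for `u = 0`). -/
def pdeg {d e : ℕ} (w : PQ d e) : WithBot ℕ :=
  w.support.sup fun s => ((∑ i : Fin d, s (Sum.inl i) : ℕ) : WithBot ℕ)

/-- The canonical (Darboux) Poisson bracket on `ℝ(λ)[p,q]`. -/
def canPB {d e : ℕ} (f g : PQ d e) : PQ d e :=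
  ∑ i : Fin d,
    (pderiv (Sum.inl i) f * pderiv (Sum.inr i) g - pderiv (Sum.inr i) f * pderiv (Sum.inl i) g)

/-- Grothendieck's inductive characterization: `D` is a differential operator of
order `≤ N` on the commutative ring `A`. -/
def IsDiffLE (A : Type*) [CommRing A] : ℕ → (A → A) → Prop
  | 0, D => ∀ a f, D (a * f) = a * D f
  | (N + 1), D => ∀ a, IsDiffLE A N fun f => D (a * f) - a * D f

/-- A differential operator `D` on `S(g)` is correct of degree `-n` : its (unique)
differential extension `D'` to the localized algebra `S(g)_I ≅ ℝ(λ)[p,q]` (the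
identification being given by `Φ`) satisfies `‖D'(u)‖ ≤ ‖u‖ - n`. -/
def CorrectDiff1 {m : ℕ} (d e : ℕ) (Φ : P m →ₐ[ℝ] PQ d e) (n : ℕ) (D : P m → P m) : Prop :=
  ∃ D' : PQ d e → PQ d e,
    (∀ u, D' (Φ u) = Φ (D u)) ∧ IsLin D' ∧ (∃ N, IsDiffLE (PQ d e) N D') ∧
    ∀ (u : PQ d e) (a : ℕ), pdeg u ≤ (a : WithBot ℕ) →
      (n ≤ a → pdeg (D' u) ≤ ((a - n : ℕ) : WithBot ℕ)) ∧ (a < n → D' u = 0)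

/-- A bidifferential operator `D` on `S(g)` is correct of degree `-n` :
`‖D'(u,v)‖ ≤ ‖u‖ + ‖v‖ - n` for its extension `D'` to `S(g)_I ≅ ℝ(λ)[p,q]`. -/
def CorrectDiffBi {m : ℕ} (d e : ℕ) (Φ : P m →ₐ[ℝ] PQ d e) (n : ℕ)
    (D : P m → P m → P m) : Prop :=
  ∃ D' : PQ d e → PQ d e → PQ d e,
    (∀ u v, D' (Φ u) (Φ v) = Φ (D u v)) ∧
    (∀ v, IsLin fun u => D' u v) ∧ (∀ u, IsLin (D' u)) ∧
    (∃ N, (∀ v, IsDiffLE (PQ d e) N fun u => D' u v) ∧ ∀ u, IsDiffLE (PQ d e) N (D' u)) ∧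
    ∀ (u v : PQ d e) (a b : ℕ), pdeg u ≤ (a : WithBot ℕ) → pdeg v ≤ (b : WithBot ℕ) →
      (n ≤ a + b → pdeg (D' u v) ≤ ((a + b - n : ℕ) : WithBot ℕ)) ∧
      (a + b < n → D' u v = 0)

/-- A tridifferential operator `D` on `S(g)` is correct of degree `-n`. -/
def CorrectDiffTri {m : ℕ} (d e : ℕ) (Φ : P m →ₐ[ℝ] PQ d e) (n : ℕ)
    (D : P m → P m → P m → P m) : Prop :=
  ∃ D' : PQ d e → PQ d e → PQ d e → PQ d e,
    (∀ u v w, D' (Φ u) (Φ v) (Φ w) = Φ (D u v w)) ∧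
    (∀ v w, IsLin fun u => D' u v w) ∧ (∀ u w, IsLin fun v => D' u v w) ∧
    (∀ u v, IsLin (D' u v)) ∧
    (∃ N, (∀ v w, IsDiffLE (PQ d e) N fun u => D' u v w) ∧
          (∀ u w, IsDiffLE (PQ d e) N fun v => D' u v w) ∧
          ∀ u v, IsDiffLE (PQ d e) N (D' u v)) ∧
    ∀ (u v w : PQ d e) (a b cd : ℕ),
      pdeg u ≤ (a : WithBot ℕ) → pdeg v ≤ (b : WithBot ℕ) → pdeg w ≤ (cd : WithBot ℕ) →
      (n ≤ a + b + cd → pdeg (D' u v w) ≤ ((a + b + cd - n : ℕ) : WithBot ℕ)) ∧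
      (a + b + cd < n → D' u v w = 0)

/-- A linear operator `T = ∑_N T_N`, differential or not, is correct of degree `-n` if all
the differential parts `T_N` of its decomposition are correct of degree `-n`. -/
def IsCorrect1 {m : ℕ} (d e : ℕ) (Φ : P m →ₐ[ℝ] PQ d e) (n : ℕ) (T : P m → P m) : Prop :=
  ∃ co : MIdx m → P m, (∀ u, T u = applyCo1 co u) ∧
    ∀ N, CorrectDiff1 d e Φ n (applyCo1N co N)

def IsCorrectBi {m : ℕ} (d e : ℕ) (Φ : P m →ₐ[ℝ] PQ d e) (n : ℕ)
    (Cc : P m → P m → P m) : Prop :=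
  ∃ co : MIdx m → MIdx m → P m, (∀ u v, Cc u v = applyCoBi co u v) ∧
    ∀ N, CorrectDiffBi d e Φ n (applyCoBiN co N)

def IsCorrectTri {m : ℕ} (d e : ℕ) (Φ : P m →ₐ[ℝ] PQ d e) (n : ℕ)
    (E : P m → P m → P m → P m) : Prop :=
  ∃ co : MIdx m → MIdx m → MIdx m → P m, (∀ u v w, E u v w = applyCoTri co u v w) ∧
    ∀ N, CorrectDiffTri d e Φ n (applyCoTriN co N)

/-- `Φ : S(g) → ℝ(λ)[p,q]`, together with the generic invariants `lam`, realizes the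
Vergne–Pedersen parametrization `(p,q,λ)` of the (Zariski-dense open set of) generic
coadjoint orbits: `Φ` is injective, identifies the localized algebra `S(g)_I` with
`ℝ(λ)[p,q]`, sends the invariants into the rational functions of the `λ_k`, and transforms
the linear Poisson bracket into the canonical one (the `(p,q)` are global Darboux
coordinates on each generic orbit). -/
def IsParam {m : ℕ} (c : Fin m → Fin m → Fin m → ℝ) (d e : ℕ)
    (Φ : P m →ₐ[ℝ] PQ d e) (lam : Fin e → P m) : Prop :=
  m = 2 * d + e ∧
  Function.Injective Φ ∧
  (∀ k, IsInvariant c (lam k)) ∧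
  (∀ k, Φ (lam k) =
    algebraMap (KK e) (PQ d e) (algebraMap (MvPolynomial (Fin e) ℝ) (KK e) (MvPolynomial.X k))) ∧
  (∀ Δ : P m, IsInvariant c Δ → ∃ κ : KK e, Φ Δ = algebraMap (KK e) (PQ d e) κ) ∧
  (∀ w : PQ d e, ∃ u Q : P m, IsInvariant c Q ∧ Q ≠ 0 ∧ w * Φ Q = Φ u) ∧
  (∀ f g : P m, Φ (pb c f g) = canPB (Φ f) (Φ g))

/-- A tangential, well graded star product of `S(g)` (Definition 9), given by the family of
cochains `Cf n` (the coefficient of `ν^n`): `C₀` is the product, `C₁` the Poisson bracket,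
`C_n(u,v) = (-1)^n C_n(v,u)`, `C_n(1,·) = 0`, each `C_n` is homogeneous of degree `-n`,
correct of degree `-n` and tangential, and the associativity identities hold. -/
structure IsTangWellGradedStar {m : ℕ} (c : Fin m → Fin m → Fin m → ℝ) (d e : ℕ)
    (Φ : P m →ₐ[ℝ] PQ d e) (Cf : ℕ → P m → P m → P m) : Prop where
  bilin : ∀ n, IsBilin (Cf n)
  zeroth : ∀ u v, Cf 0 u v = u * v
  first : ∀ u v, Cf 1 u v = pb c u v
  parity : ∀ n, 2 ≤ n → ∀ u v, Cf n u v = (-1 : ℝ) ^ n • Cf n v u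
  unit : ∀ n, 1 ≤ n → ∀ v, Cf n 1 v = 0
  homog : ∀ n, HomogBi n (Cf n)
  tang : ∀ n, 1 ≤ n → TangBi c (Cf n)
  correct : ∀ n, 2 ≤ n → IsCorrectBi d e Φ n (Cf n)
  assoc : ∀ (k : ℕ) (u v w : P m),
    ∑ p ∈ Finset.HasAntidiagonal.antidiagonal k, Cf p.1 (Cf p.2 u v) w
      = ∑ p ∈ Finset.HasAntidiagonal.antidiagonal k, Cf p.1 u (Cf p.2 v w)


/-- Remark 11 (i). Let `k ≥ 2`. If `C` is a bilinear Hochschild 2-cocycle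
on `S(g)` which is skew-symmetric in its two arguments, tangential, homogeneous of degree
`-(2k-1)` and correct of degree `-(2k-1)`, then `C` is identically zero. -/
theorem skew_tangential_two_cocycle_vanishes
    (m : ℕ) (c : Fin m → Fin m → Fin m → ℝ) (hc : IsJordanHolderLie c)
    (d e : ℕ) (Φ : P m →ₐ[ℝ] PQ d e) (lam : Fin e → P m) (hpar : IsParam c d e Φ lam)
    (k : ℕ) (hk : 2 ≤ k)
    (Cc : P m → P m → P m) (hlin : IsBilin Cc)
    (hcocycle : ∀ u v w : P m, hoch2 Cc u v w = 0)
    (hskew : ∀ u v : P m, Cc u v = - Cc v u)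
    (htang : TangBi c Cc) (hhom : HomogBi (2 * k - 1) Cc)
    (hcor : IsCorrectBi d e Φ (2 * k - 1) Cc) :
    ∀ u v : P m, Cc u v = 0 := by
  classical
  -- unfolded cocycle identity
  have hco : ∀ u v w : P m,
      u * Cc v w - Cc (u * v) w + Cc u (v * w) - Cc u v * w = 0 := by
    intro u v w
    simpa [hoch2] using hcocycle u v w
  -- C is a derivation in its second argument
  have hleib : ∀ a b c' : P m, Cc a (b * c') = c' * Cc a b + b * Cc a c' := by
    intro a b c'
    have hA := hco c' a b
    have hB := hco a b c'
    have hC := hco b c' a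
    have s1 : Cc (a * b) c' = - Cc c' (a * b) := hskew _ _
    have s2 : Cc (b * c') a = - Cc a (b * c') := hskew _ _
    have s3 : Cc b (c' * a) = - Cc (c' * a) b := hskew _ _
    have s4 : Cc a c' = - Cc c' a := hskew _ _
    have h2 : (2 : ℝ) • Cc a (b * c') = (2 : ℝ) • (c' * Cc a b + b * Cc a c') := by
      rw [two_smul, two_smul]
      linear_combination hB + hC - hA + s1 + s2 - s3 - 2 * b * s4
    have h3 := congrArg (fun x : P m => (2 : ℝ)⁻¹ • x) h2
    norm_num [smul_smul] at h3
    exact h3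
  have hVC : VCBi Cc := htang.1
  -- C vanishes on pairs of generators by homogeneity
  have hXX : ∀ i j : Fin m, Cc (MvPolynomial.X i) (MvPolynomial.X j) = 0 := by
    intro i j
    exact (hhom 1 1 _ _ (MvPolynomial.isHomogeneous_X ℝ i)
      (MvPolynomial.isHomogeneous_X ℝ j)).2 (by omega)
  -- C vanishes whenever the second argument is a generator
  have hX : ∀ (j : Fin m) (u : P m), Cc u (MvPolynomial.X j) = 0 := by
    intro j u
    induction u using MvPolynomial.induction_on with
    | C r => exact (hVC r _).1
    | add p q hp hq =>
      have hadd : Cc (p + q) (MvPolynomial.X j)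
          = Cc p (MvPolynomial.X j) + Cc q (MvPolynomial.X j) :=
        (hlin.1 _).1 p q
      rw [hadd, hp, hq, add_zero]
    | mul_X p i hp =>
      have h1 : Cc (p * MvPolynomial.X i) (MvPolynomial.X j)
          = - Cc (MvPolynomial.X j) (p * MvPolynomial.X i) := hskew _ _
      have e1 : Cc (MvPolynomial.X j) p = 0 := by
        rw [hskew (MvPolynomial.X j) p, hp, neg_zero]
      have e2 : Cc (MvPolynomial.X j) (MvPolynomial.X i) = 0 := by
        rw [hskew (MvPolynomial.X j) (MvPolynomial.X i), hXX i j, neg_zero]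
      rw [h1, hleib (MvPolynomial.X j) p (MvPolynomial.X i), e1, e2,
        mul_zero, mul_zero, add_zero, neg_zero]
  intro u v
  induction v using MvPolynomial.induction_on with
  | C r => exact (hVC r u).2
  | add p q hp hq =>
    have hadd : Cc u (p + q) = Cc u p + Cc u q := (hlin.2 u).1 p q
    rw [hadd, hp, hq, add_zero]
  | mul_X p i hp =>
    rw [hleib u p (MvPolynomial.X i), hp, hX i u, mul_zero, mul_zero, add_zero]

end TangentialStar
end
end

section
/- For the nilpotent Lie algebra g_54, the Gutt star product ∗_G on S(g_54) is not tangential: its second order cochain C_{2,G} satisfies C_{2,G}(Δ, v) ≠ Δ·C_{2,G}(1, v) = 0 for some v ∈ S(g_54), where Δ = x_3²/2 + x_1 x_5 - x_2 x_4 is an invariant polynomial. -/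
open MvPolynomial

noncomputable section

namespace TangentialStar

/-! ### The Gutt star product -/

/-- `σm : S(g) ≃ U(g)` is the symmetrization map onto the universal enveloping algebra `U`
of `g` : it is a linear bijection sending powers of affine elements to powers, it satisfies
the bracket relation `σ(X)σ(Y) - σ(Y)σ(X) = σ({X,Y})` on the generators, and `U` is
generated as an algebra by `σ(g)`. -/
def IsSymmetrization {m : ℕ} (c : Fin m → Fin m → Fin m → ℝ) {U : Type*} [Ring U]
    [Algebra ℝ U] (σm : P m ≃ₗ[ℝ] U) : Prop :=
  σm 1 = 1 ∧
  (∀ f : P m, f.totalDegree ≤ 1 → ∀ k : ℕ, σm (f ^ k) = σm f ^ k) ∧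
  (∀ i j, σm (MvPolynomial.X i) * σm (MvPolynomial.X j)
      - σm (MvPolynomial.X j) * σm (MvPolynomial.X i)
      = σm (pb c (MvPolynomial.X i) (MvPolynomial.X j))) ∧
  Algebra.adjoin ℝ (Set.range fun i => σm (MvPolynomial.X i)) = ⊤

/-- The cochains of the Gutt star product:
`C_{n,G}(P,Q) = 2^n σ⁻¹([σ(P_r)·σ(Q_s)]_{r+s-n})`, summed over the homogeneous components
`P_r`, `Q_s` of `P`, `Q`, where `[·]_k` denotes the component in `σ(S^k(g))` relative to the
decomposition `U(g) = ⊕_k σ(S^k(g))`. -/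
def guttC {m : ℕ} {U : Type*} [Ring U] [Algebra ℝ U] (σm : P m ≃ₗ[ℝ] U) (n : ℕ)
    (u v : P m) : P m :=
  ∑ᶠ (r : ℕ) (s : ℕ),
    if n ≤ r + s then
      (2 : ℝ) ^ n •
        homogeneousComponent (r + s - n)
          (σm.symm (σm (homogeneousComponent r u) * σm (homogeneousComponent s v)))
    else 0

/-! ### The nilpotent Lie algebra `g₅₄` -/

/-- Structure constants of the `5`-dimensional nilpotent Lie algebra `g₅₄`:
`[X₅,X₄] = X₃`, `[X₅,X₃] = X₂`, `[X₄,X₃] = X₁` (indices shifted by one: `X i` is `X_{i+1}`,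
and `x_{i+1}` is `MvPolynomial.X i`). -/
def c54 : Fin 5 → Fin 5 → Fin 5 → ℝ := fun i j k =>
  if i = 4 ∧ j = 3 ∧ k = 2 then 1
  else if i = 3 ∧ j = 4 ∧ k = 2 then -1
  else if i = 4 ∧ j = 2 ∧ k = 1 then 1
  else if i = 2 ∧ j = 4 ∧ k = 1 then -1
  else if i = 3 ∧ j = 2 ∧ k = 0 then 1
  else if i = 2 ∧ j = 3 ∧ k = 0 then -1
  else 0

/-- The invariant polynomial `Δ = x₃²/2 + x₁x₅ - x₂x₄` on `g₅₄*`. -/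
def Δ54 : P 5 :=
  MvPolynomial.C (1 / 2 : ℝ) * MvPolynomial.X 2 ^ 2
    + MvPolynomial.X 0 * MvPolynomial.X 4 - MvPolynomial.X 1 * MvPolynomial.X 3

/-! ### Auxiliary lemmas for the proof -/

open MvPolynomial in
lemma pb_X_X {m : ℕ} (c : Fin m → Fin m → Fin m → ℝ) (i j : Fin m) :
    pb c (X i) (X j) = ∑ k, C (c i j k) * X k := by
  classical
  simp [pb, pderiv_X, Pi.single_apply, mul_ite, ite_mul, Finset.sum_ite_eq, Finset.sum_ite_eq']

open MvPolynomial in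
lemma inv54 : IsInvariant c54 Δ54 := by
  intro i
  have h2 : (C (2⁻¹:ℝ) : P 5) * 2 = 1 := by
    rw [← map_ofNat (C : ℝ →+* P 5) 2, ← map_mul]; norm_num
  fin_cases i
  · simp [pb, Δ54, c54, Fin.sum_univ_five, pderiv_X, Pi.single_apply]
  · simp [pb, Δ54, c54, Fin.sum_univ_five, pderiv_X, Pi.single_apply]
  · simp [pb, Δ54, c54, Fin.sum_univ_five, pderiv_X, Pi.single_apply]
    ring
  · simp [pb, Δ54, c54, Fin.sum_univ_five, pderiv_X, Pi.single_apply]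
    linear_combination (X 0 * X 2 : P 5) * h2
  · simp [pb, Δ54, c54, Fin.sum_univ_five, pderiv_X, Pi.single_apply]
    linear_combination (X 1 * X 2 : P 5) * h2

open MvPolynomial in
lemma br43 : pb c54 (X 4) (X 3) = X 2 := by rw [pb_X_X]; simp [c54, Fin.sum_univ_five]
open MvPolynomial in
lemma br42 : pb c54 (X 4) (X 2) = X 1 := by rw [pb_X_X]; simp [c54, Fin.sum_univ_five]
open MvPolynomial in
lemma br32 : pb c54 (X 3) (X 2) = X 0 := by rw [pb_X_X]; simp [c54, Fin.sum_univ_five]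
open MvPolynomial in
lemma br10 : pb c54 (X 1) (X 0) = 0 := by rw [pb_X_X]; simp [c54, Fin.sum_univ_five]
open MvPolynomial in
lemma br20 : pb c54 (X 2) (X 0) = 0 := by rw [pb_X_X]; simp [c54, Fin.sum_univ_five]
open MvPolynomial in
lemma br30 : pb c54 (X 3) (X 0) = 0 := by rw [pb_X_X]; simp [c54, Fin.sum_univ_five]
open MvPolynomial in
lemma br40 : pb c54 (X 4) (X 0) = 0 := by rw [pb_X_X]; simp [c54, Fin.sum_univ_five]
open MvPolynomial in
lemma br21 : pb c54 (X 2) (X 1) = 0 := by rw [pb_X_X]; simp [c54, Fin.sum_univ_five]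
open MvPolynomial in
lemma br31 : pb c54 (X 3) (X 1) = 0 := by rw [pb_X_X]; simp [c54, Fin.sum_univ_five]
open MvPolynomial in
lemma br41 : pb c54 (X 4) (X 1) = 0 := by rw [pb_X_X]; simp [c54, Fin.sum_univ_five]

/-- The key noncommutative identity in `U(g₅₄)`. -/
lemma keyU {U : Type*} [Ring U] (a b c d e : U)
    (hea : e*a = a*e) (hdb : d*b = b*d)
    (hba : b*a = a*b) (hca : c*a = a*c) (hda : d*a = a*d)
    (hcb : c*b = b*c) (heb : e*b = b*e)
    (hdc : d*c = c*d + a) (hec : e*c = c*e + b) (hed : e*d = d*e + c) :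
    (24:U) * (((c*c + (a*e + a*e)) - (b*d + b*d)) * (e*e)) =
      (a+(e+e))^4 - (a-(e+e))^4 - ((a+e)^4 + (a+e)^4) + ((a-e)^4 + (a-e)^4)
      - ((b+d+e)^4 + (b+d-e)^4 - (b-d+e)^4 - (b-d-e)^4
          - ((b+d)^4 + (b+d)^4) + ((b-d)^4 + (b-d)^4))
      + ((c+e)^4 + (c+e)^4) + ((c-e)^4 + (c-e)^4)
      - ((c^4 + c^4) + (c^4 + c^4)) - ((e^4 + e^4) + (e^4 + e^4))
      + ((b^2 + b^2) + (b^2 + b^2)) := by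
  have hba' : ∀ x, b*(a*x) = a*(b*x) := fun x => by rw [← mul_assoc, hba, mul_assoc]
  have hca' : ∀ x, c*(a*x) = a*(c*x) := fun x => by rw [← mul_assoc, hca, mul_assoc]
  have hda' : ∀ x, d*(a*x) = a*(d*x) := fun x => by rw [← mul_assoc, hda, mul_assoc]
  have hea' : ∀ x, e*(a*x) = a*(e*x) := fun x => by rw [← mul_assoc, hea, mul_assoc]
  have hcb' : ∀ x, c*(b*x) = b*(c*x) := fun x => by rw [← mul_assoc, hcb, mul_assoc]
  have hdb' : ∀ x, d*(b*x) = b*(d*x) := fun x => by rw [← mul_assoc, hdb, mul_assoc]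
  have heb' : ∀ x, e*(b*x) = b*(e*x) := fun x => by rw [← mul_assoc, heb, mul_assoc]
  have hdc' : ∀ x, d*(c*x) = c*(d*x) + a*x := fun x => by
    rw [← mul_assoc, hdc, add_mul, mul_assoc]
  have hec' : ∀ x, e*(c*x) = c*(e*x) + b*x := fun x => by
    rw [← mul_assoc, hec, add_mul, mul_assoc]
  have hed' : ∀ x, e*(d*x) = d*(e*x) + c*x := fun x => by
    rw [← mul_assoc, hed, add_mul, mul_assoc]
  simp only [pow_succ, pow_zero, one_mul, mul_add, add_mul, mul_sub, sub_mul, mul_assoc,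
    hba, hca, hda, hea, hcb, hdb, heb, hdc, hec, hed,
    hba', hca', hda', hea', hcb', hdb', heb', hdc', hec', hed']
  noncomm_ring

/-- `48·σ⁻¹(σ(Δ)·σ(x₅²))` as an explicit polynomial. -/
def P48 : P 5 :=
  48 * (MvPolynomial.X 0 * MvPolynomial.X 4^3)
    - 48 * (MvPolynomial.X 1 * MvPolynomial.X 3 * MvPolynomial.X 4^2)
    + 24 * (MvPolynomial.X 2^2 * MvPolynomial.X 4^2)
    + 4 * MvPolynomial.X 1^2

/-- `P48` as a combination of 4th and 2nd powers of affine forms. -/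
def S48 : P 5 :=
  (MvPolynomial.X 0+(MvPolynomial.X 4+MvPolynomial.X 4))^4
    - (MvPolynomial.X 0-(MvPolynomial.X 4+MvPolynomial.X 4))^4
    - ((MvPolynomial.X 0+MvPolynomial.X 4)^4 + (MvPolynomial.X 0+MvPolynomial.X 4)^4)
    + ((MvPolynomial.X 0-MvPolynomial.X 4)^4 + (MvPolynomial.X 0-MvPolynomial.X 4)^4)
    - ((MvPolynomial.X 1+MvPolynomial.X 3+MvPolynomial.X 4)^4
        + (MvPolynomial.X 1+MvPolynomial.X 3-MvPolynomial.X 4)^4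
        - (MvPolynomial.X 1-MvPolynomial.X 3+MvPolynomial.X 4)^4
        - (MvPolynomial.X 1-MvPolynomial.X 3-MvPolynomial.X 4)^4
        - ((MvPolynomial.X 1+MvPolynomial.X 3)^4 + (MvPolynomial.X 1+MvPolynomial.X 3)^4)
        + ((MvPolynomial.X 1-MvPolynomial.X 3)^4 + (MvPolynomial.X 1-MvPolynomial.X 3)^4))
    + ((MvPolynomial.X 2+MvPolynomial.X 4)^4 + (MvPolynomial.X 2+MvPolynomial.X 4)^4)
    + ((MvPolynomial.X 2-MvPolynomial.X 4)^4 + (MvPolynomial.X 2-MvPolynomial.X 4)^4)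
    - ((MvPolynomial.X 2^4 + MvPolynomial.X 2^4) + (MvPolynomial.X 2^4 + MvPolynomial.X 2^4))
    - ((MvPolynomial.X 4^4 + MvPolynomial.X 4^4) + (MvPolynomial.X 4^4 + MvPolynomial.X 4^4))
    + ((MvPolynomial.X 1^2 + MvPolynomial.X 1^2) + (MvPolynomial.X 1^2 + MvPolynomial.X 1^2))

lemma P48_eq_S48 : P48 = S48 := by unfold P48 S48; ring

set_option maxHeartbeats 4000000 in
set_option synthInstance.maxHeartbeats 1000000 in
/-- For the nilpotent Lie algebra `g₅₄`, the Gutt star product on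
`S(g₅₄)` is not tangential: the invariant polynomial `Δ = x₃²/2 + x₁x₅ - x₂x₄` and its
second order cochain `C_{2,G}` satisfy `C_{2,G}(Δ, v) ≠ Δ · C_{2,G}(1, v) = 0` for some
`v ∈ S(g₅₄)`. -/
theorem gutt_star_product_not_tangential_g54
    (U : Type) [Ring U] [Algebra ℝ U] (σm : P 5 ≃ₗ[ℝ] U)
    (hσ : IsSymmetrization c54 σm) :
    IsInvariant c54 Δ54 ∧
    (∀ v : P 5, guttC σm 2 1 v = 0) ∧
    (∃ v : P 5, guttC σm 2 Δ54 v ≠ Δ54 * guttC σm 2 1 v) ∧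
    ¬ TangBi c54 (guttC σm 2) := by
  classical
  obtain ⟨hσ1, hσpow, hσbr, -⟩ := hσ
  -- commutation relations among the generators σm (X i)
  have hba : σm (X 1) * σm (X 0) = σm (X 0) * σm (X 1) := by
    have h := hσbr 1 0; rw [br10, map_zero, sub_eq_zero] at h; exact h
  have hca : σm (X 2) * σm (X 0) = σm (X 0) * σm (X 2) := by
    have h := hσbr 2 0; rw [br20, map_zero, sub_eq_zero] at h; exact h
  have hda : σm (X 3) * σm (X 0) = σm (X 0) * σm (X 3) := by
    have h := hσbr 3 0; rw [br30, map_zero, sub_eq_zero] at h; exact h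
  have hea : σm (X 4) * σm (X 0) = σm (X 0) * σm (X 4) := by
    have h := hσbr 4 0; rw [br40, map_zero, sub_eq_zero] at h; exact h
  have hcb : σm (X 2) * σm (X 1) = σm (X 1) * σm (X 2) := by
    have h := hσbr 2 1; rw [br21, map_zero, sub_eq_zero] at h; exact h
  have hdb : σm (X 3) * σm (X 1) = σm (X 1) * σm (X 3) := by
    have h := hσbr 3 1; rw [br31, map_zero, sub_eq_zero] at h; exact h
  have heb : σm (X 4) * σm (X 1) = σm (X 1) * σm (X 4) := by
    have h := hσbr 4 1; rw [br41, map_zero, sub_eq_zero] at h; exact h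
  have hdc : σm (X 3) * σm (X 2) = σm (X 2) * σm (X 3) + σm (X 0) := by
    have h := hσbr 3 2; rw [br32, sub_eq_iff_eq_add] at h
    exact h.trans (add_comm _ _)
  have hec : σm (X 4) * σm (X 2) = σm (X 2) * σm (X 4) + σm (X 1) := by
    have h := hσbr 4 2; rw [br42, sub_eq_iff_eq_add] at h
    exact h.trans (add_comm _ _)
  have hed : σm (X 4) * σm (X 3) = σm (X 3) * σm (X 4) + σm (X 2) := by
    have h := hσbr 4 3; rw [br43, sub_eq_iff_eq_add] at h
    exact h.trans (add_comm _ _)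
  -- total degree helpers
  have td1 : ∀ i : Fin 5, (X i : P 5).totalDegree ≤ 1 := fun i => le_of_eq (totalDegree_X i)
  have tdadd : ∀ {f g : P 5}, f.totalDegree ≤ 1 → g.totalDegree ≤ 1 →
      (f + g).totalDegree ≤ 1 :=
    fun hf hg => le_trans (totalDegree_add _ _) (max_le hf hg)
  have tdsub : ∀ {f g : P 5}, f.totalDegree ≤ 1 → g.totalDegree ≤ 1 →
      (f - g).totalDegree ≤ 1 := by
    intro f g hf hg
    rw [sub_eq_add_neg]
    exact tdadd hf ((totalDegree_neg g).le.trans hg)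
  -- transport of powers of affine forms
  have hq1 := hσpow (X 0 + (X 4 + X 4)) (tdadd (td1 0) (tdadd (td1 4) (td1 4))) 4
  have hq2 := hσpow (X 0 - (X 4 + X 4)) (tdsub (td1 0) (tdadd (td1 4) (td1 4))) 4
  have hq3 := hσpow (X 0 + X 4) (tdadd (td1 0) (td1 4)) 4
  have hq4 := hσpow (X 0 - X 4) (tdsub (td1 0) (td1 4)) 4
  have hr1 := hσpow (X 1 + X 3 + X 4) (tdadd (tdadd (td1 1) (td1 3)) (td1 4)) 4
  have hr2 := hσpow (X 1 + X 3 - X 4) (tdsub (tdadd (td1 1) (td1 3)) (td1 4)) 4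
  have hr3 := hσpow (X 1 - X 3 + X 4) (tdadd (tdsub (td1 1) (td1 3)) (td1 4)) 4
  have hr4 := hσpow (X 1 - X 3 - X 4) (tdsub (tdsub (td1 1) (td1 3)) (td1 4)) 4
  have hr5 := hσpow (X 1 + X 3) (tdadd (td1 1) (td1 3)) 4
  have hr6 := hσpow (X 1 - X 3) (tdsub (td1 1) (td1 3)) 4
  have hs1 := hσpow (X 2 + X 4) (tdadd (td1 2) (td1 4)) 4
  have hs2 := hσpow (X 2 - X 4) (tdsub (td1 2) (td1 4)) 4
  have hc4 := hσpow (X 2) (td1 2) 4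
  have he4 := hσpow (X 4) (td1 4) 4
  have hb2 := hσpow (X 1) (td1 1) 2
  have hσS : σm S48 =
      (σm (X 0)+(σm (X 4)+σm (X 4)))^4 - (σm (X 0)-(σm (X 4)+σm (X 4)))^4 - ((σm (X 0)+σm (X 4))^4 + (σm (X 0)+σm (X 4))^4) + ((σm (X 0)-σm (X 4))^4 + (σm (X 0)-σm (X 4))^4)
      - ((σm (X 1)+σm (X 3)+σm (X 4))^4 + (σm (X 1)+σm (X 3)-σm (X 4))^4 - (σm (X 1)-σm (X 3)+σm (X 4))^4 - (σm (X 1)-σm (X 3)-σm (X 4))^4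
          - ((σm (X 1)+σm (X 3))^4 + (σm (X 1)+σm (X 3))^4) + ((σm (X 1)-σm (X 3))^4 + (σm (X 1)-σm (X 3))^4))
      + ((σm (X 2)+σm (X 4))^4 + (σm (X 2)+σm (X 4))^4) + ((σm (X 2)-σm (X 4))^4 + (σm (X 2)-σm (X 4))^4)
      - ((σm (X 2)^4 + σm (X 2)^4) + (σm (X 2)^4 + σm (X 2)^4)) - ((σm (X 4)^4 + σm (X 4)^4) + (σm (X 4)^4 + σm (X 4)^4))
      + ((σm (X 1)^2 + σm (X 1)^2) + (σm (X 1)^2 + σm (X 1)^2)) := by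
    unfold S48
    simp only [map_add, map_sub, hq1, hq2, hq3, hq4, hr1, hr2, hr3, hr4, hr5, hr6,
      hs1, hs2, hc4, he4, hb2]
  have hkey := keyU (σm (X 0)) (σm (X 1)) (σm (X 2)) (σm (X 3)) (σm (X 4))
    hea hdb hba hca hda hcb heb hdc hec hed
  -- σm of Δ₅₄, doubled
  have h2' : (C (1/2:ℝ) : P 5) * 2 = 1 := by
    rw [← map_ofNat (C : ℝ →+* P 5) 2, ← map_mul]; norm_num
  have hΔpoly : Δ54 + Δ54 = (X 2^2 + (X 0*X 4 + X 0*X 4)) - (X 1*X 3 + X 1*X 3) := by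
    unfold Δ54; linear_combination (X 2^2 : P 5) * h2'
  have hx04 : σm (X 0 * X 4 : P 5) + σm (X 0 * X 4 : P 5)
      = σm (X 0) * σm (X 4) + σm (X 0) * σm (X 4) := by
    have hp : (X 0 + X 4 : P 5)^2 = (X 0^2 + X 4^2) + (X 0*X 4 + X 0*X 4) := by ring
    have h := congrArg σm hp
    rw [hσpow _ (tdadd (td1 0) (td1 4)) 2] at h
    simp only [map_add] at h
    rw [hσpow _ (td1 0) 2, hσpow _ (td1 4) 2] at h
    have hx : (σm (X 0) + σm (X 4))^2
        = (σm (X 0)^2 + σm (X 4)^2) + (σm (X 0) * σm (X 4) + σm (X 0) * σm (X 4)) := by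
      have expand : (σm (X 0) + σm (X 4))^2
          = (σm (X 0)^2 + σm (X 4)^2) + (σm (X 0) * σm (X 4) + σm (X 4) * σm (X 0)) := by
        noncomm_ring
      rw [expand, hea]
    rw [hx] at h
    exact (add_left_cancel h).symm
  have hx13 : σm (X 1 * X 3 : P 5) + σm (X 1 * X 3 : P 5)
      = σm (X 1) * σm (X 3) + σm (X 1) * σm (X 3) := by
    have hp : (X 1 + X 3 : P 5)^2 = (X 1^2 + X 3^2) + (X 1*X 3 + X 1*X 3) := by ring
    have h := congrArg σm hp
    rw [hσpow _ (tdadd (td1 1) (td1 3)) 2] at h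
    simp only [map_add] at h
    rw [hσpow _ (td1 1) 2, hσpow _ (td1 3) 2] at h
    have hx : (σm (X 1) + σm (X 3))^2
        = (σm (X 1)^2 + σm (X 3)^2) + (σm (X 1) * σm (X 3) + σm (X 1) * σm (X 3)) := by
      have expand : (σm (X 1) + σm (X 3))^2
          = (σm (X 1)^2 + σm (X 3)^2) + (σm (X 1) * σm (X 3) + σm (X 3) * σm (X 1)) := by
        noncomm_ring
      rw [expand, hdb]
    rw [hx] at h
    exact (add_left_cancel h).symm
  have hΔ2 : σm Δ54 + σm Δ54
      = σm (X 2) * σm (X 2) + (σm (X 0) * σm (X 4) + σm (X 0) * σm (X 4))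
        - (σm (X 1) * σm (X 3) + σm (X 1) * σm (X 3)) := by
    have h := congrArg σm hΔpoly
    simp only [map_add, map_sub] at h
    rw [hσpow (X 2) (td1 2) 2, sq, hx04, hx13] at h
    exact h
  have hv2 : σm ((X 4 : P 5)^2) = σm (X 4) * σm (X 4) := by
    rw [hσpow _ (td1 4) 2, sq]
  rw [← hΔ2, ← hv2] at hkey
  have hPU : σm P48 = 24 * ((σm Δ54 + σm Δ54) * σm ((X 4:P 5)^2)) := by
    rw [P48_eq_S48, hσS]
    exact hkey.symm
  have hz : σm Δ54 * σm ((X 4:P 5)^2) = σm ((48:ℝ)⁻¹ • P48) := by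
    rw [map_smul, hPU, add_mul, ← two_smul ℝ (σm Δ54 * σm ((X 4:P 5)^2)),
      show ((24:U)) = algebraMap ℝ U 24 from (map_ofNat _ _).symm, ← Algebra.smul_def,
      smul_smul, smul_smul]
    norm_num
  have hsymm : σm.symm (σm Δ54 * σm ((X 4:P 5)^2)) = (48:ℝ)⁻¹ • P48 := by
    rw [hz, LinearEquiv.symm_apply_apply]
  -- homogeneity facts
  have hΔhom : Δ54.IsHomogeneous 2 := by
    have h1 : (C (1/2:ℝ) * X 2^2 : P 5).IsHomogeneous 2 := by
      simpa using (isHomogeneous_C (Fin 5) (1/2:ℝ)).mul ((isHomogeneous_X ℝ (2:Fin 5)).pow 2)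
    have h2 : (X 0 * X 4 : P 5).IsHomogeneous 2 :=
      (isHomogeneous_X ℝ (0:Fin 5)).mul (isHomogeneous_X ℝ (4:Fin 5))
    have h3 : (X 1 * X 3 : P 5).IsHomogeneous 2 :=
      (isHomogeneous_X ℝ (1:Fin 5)).mul (isHomogeneous_X ℝ (3:Fin 5))
    exact (h1.add h2).sub h3
  have hcompΔ : ∀ r, homogeneousComponent r Δ54 = if r = 2 then Δ54 else 0 :=
    fun r => homogeneousComponent_of_mem ((mem_homogeneousSubmodule _ _).mpr hΔhom)
  have hvhom : ((X 4:P 5)^2).IsHomogeneous 2 := by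
    simpa using (isHomogeneous_X ℝ (4:Fin 5)).pow 2
  have hcompv : ∀ s, homogeneousComponent s ((X 4:P 5)^2) = if s = 2 then (X 4:P 5)^2 else 0 :=
    fun s => homogeneousComponent_of_mem ((mem_homogeneousSubmodule _ _).mpr hvhom)
  have hcomp1 : ∀ r, homogeneousComponent r (1:P 5) = if r = 0 then 1 else 0 :=
    fun r => homogeneousComponent_of_mem ((mem_homogeneousSubmodule _ _).mpr
      (isHomogeneous_one _ _))
  have h48C : (48 : P 5) = C (48:ℝ) := (map_ofNat _ _).symm
  have h24C : (24 : P 5) = C (24:ℝ) := (map_ofNat _ _).symm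
  have h4C : (4 : P 5) = C (4:ℝ) := (map_ofNat _ _).symm
  have hQ4 : ((48 * (X 0 * X 4^3) - 48 * (X 1 * X 3 * X 4^2)
      + 24 * (X 2^2 * X 4^2)) : P 5).IsHomogeneous 4 := by
    rw [h48C, h24C]
    refine IsHomogeneous.add (IsHomogeneous.sub ?_ ?_) ?_
    · simpa using (isHomogeneous_C (Fin 5) (48:ℝ)).mul
        ((isHomogeneous_X ℝ (0:Fin 5)).mul ((isHomogeneous_X ℝ (4:Fin 5)).pow 3))
    · simpa using (isHomogeneous_C (Fin 5) (48:ℝ)).mul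
        (((isHomogeneous_X ℝ (1:Fin 5)).mul (isHomogeneous_X ℝ (3:Fin 5))).mul
          ((isHomogeneous_X ℝ (4:Fin 5)).pow 2))
    · simpa using (isHomogeneous_C (Fin 5) (24:ℝ)).mul
        (((isHomogeneous_X ℝ (2:Fin 5)).pow 2).mul ((isHomogeneous_X ℝ (4:Fin 5)).pow 2))
  have hX12 : ((4 * X 1^2) : P 5).IsHomogeneous 2 := by
    rw [h4C]
    simpa using (isHomogeneous_C (Fin 5) (4:ℝ)).mul ((isHomogeneous_X ℝ (1:Fin 5)).pow 2)
  have hcP48 : homogeneousComponent 2 P48 = 4 * X 1^2 := by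
    have hsplit : P48 = (48 * (X 0 * X 4^3) - 48 * (X 1 * X 3 * X 4^2)
        + 24 * (X 2^2 * X 4^2)) + 4 * X 1^2 := by
      unfold P48; ring
    rw [hsplit, map_add,
      homogeneousComponent_of_mem ((mem_homogeneousSubmodule _ _).mpr hQ4),
      homogeneousComponent_of_mem ((mem_homogeneousSubmodule _ _).mpr hX12),
      if_neg (by norm_num), if_pos rfl, zero_add]
  -- the Gutt cochain on (1, v)
  have hgutt1 : ∀ v : P 5, guttC σm 2 1 v = 0 := by
    intro v
    unfold guttC
    rw [finsum_eq_single _ 0 ?_]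
    · have hterm : ∀ s : ℕ,
          (if 2 ≤ 0 + s then
            (2:ℝ)^2 • homogeneousComponent (0 + s - 2)
              (σm.symm (σm (homogeneousComponent 0 (1:P 5)) * σm (homogeneousComponent s v)))
          else 0) = (0 : P 5) := by
        intro s
        rw [hcomp1 0, if_pos rfl, hσ1, one_mul, LinearEquiv.symm_apply_apply]
        by_cases hs : 2 ≤ 0 + s
        · rw [if_pos hs, homogeneousComponent_of_mem ((mem_homogeneousSubmodule _ _).mpr
            (homogeneousComponent_isHomogeneous s v)), if_neg (by omega), smul_zero]
        · rw [if_neg hs]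
      rw [finsum_congr hterm, finsum_zero]
    · intro r hr
      simp only [hcomp1, hr, if_false, map_zero, zero_mul, smul_zero, ite_self, finsum_zero]
  -- the Gutt cochain on (Δ, x₅²)
  have hguttΔ : guttC σm 2 Δ54 ((X 4:P 5)^2)
      = (2:ℝ)^2 • ((48:ℝ)⁻¹ • (4 * X 1^2 : P 5)) := by
    unfold guttC
    rw [finsum_eq_single _ 2 ?_]
    · rw [finsum_eq_single _ 2 ?_]
      · rw [if_pos (by norm_num), hcompΔ 2, if_pos rfl, hcompv 2, if_pos rfl, hsymm,
          show (2+2-2 : ℕ) = 2 by norm_num, map_smul, hcP48]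
      · intro s hs
        simp only [hcompv, hs, if_false, map_zero, mul_zero, smul_zero, ite_self]
    · intro r hr
      simp only [hcompΔ, hr, if_false, map_zero, zero_mul, smul_zero, ite_self, finsum_zero]
  have hne : ((2:ℝ)^2 • ((48:ℝ)⁻¹ • (4 * X 1^2 : P 5))) ≠ 0 := by
    have hX : (4 * X 1^2 : P 5) ≠ 0 := by
      refine mul_ne_zero ?_ (pow_ne_zero _ (X_ne_zero _))
      rw [h4C, Ne, C_eq_zero]
      norm_num
    rw [smul_smul, smul_eq_C_mul]
    refine mul_ne_zero ?_ hX
    rw [Ne, C_eq_zero]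
    norm_num
  refine ⟨inv54, hgutt1, ⟨(X 4:P 5)^2, ?_⟩, ?_⟩
  · rw [hguttΔ, hgutt1 ((X 4:P 5)^2), mul_zero]
    exact hne
  · rintro ⟨-, ht⟩
    have h := (ht Δ54 inv54 1 ((X 4:P 5)^2)).1
    rw [mul_one, hgutt1 ((X 4:P 5)^2), mul_zero, hguttΔ] at h
    exact hne h.symm

end TangentialStar
end
end
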